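/- For every integer m ≥ 2 and every real t, one has V_m⁺(t)² − V_m⁻(t)² = V_{m−1}⁺(t) · V_m⁺(t). -/

import Mathlib

open MeasureTheory Matrix Filter

/-- The k-th Fourier coefficient of the symbol `f(e^{iθ}) = e^{2t cos θ}`. -/
noncomputable def fk (t : ℝ) (k : ℤ) : ℝ :=
  (1 / (2 * Real.pi)) *
    ∫ θ in (0:ℝ)..(2 * Real.pi), Real.exp (2 * t * Real.cos θ) * Real.cos ((k : ℝ) * θ)

/-- The n×n Toeplitz matrix `T_n(t)` with (j,k) entry `f_{j-k}(t)`. -/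
noncomputable def Tmat (n : ℕ) (t : ℝ) : Matrix (Fin n) (Fin n) ℝ :=
  fun j k => fk t ((j : ℤ) - (k : ℤ))

/-- The Toeplitz determinant `D_n(t)`. -/
noncomputable def Dn (n : ℕ) (t : ℝ) : ℝ := (Tmat n t).det

/-- δ⁺ = (1,0,…,0)ᵀ. -/
def deltaPlus (n : ℕ) : Fin n → ℝ := fun i => if (i : ℕ) = 0 then 1 else 0

/-- δ⁻ = (0,…,0,1)ᵀ. -/
def deltaMinus (n : ℕ) : Fin n → ℝ := fun i => if (i : ℕ) = n - 1 then 1 else 0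

/-- f⁺ = (f_1,…,f_n)ᵀ. -/
noncomputable def fplus (n : ℕ) (t : ℝ) : Fin n → ℝ := fun j => fk t ((j : ℤ) + 1)

/-- f⁻ = (f_n,…,f_1)ᵀ. -/
noncomputable def fminus (n : ℕ) (t : ℝ) : Fin n → ℝ := fun j => fk t ((n : ℤ) - (j : ℤ))

/-- U_n(t) = ⟨T_n(t)⁻¹ f⁺, δ⁻⟩. -/
noncomputable def Un (n : ℕ) (t : ℝ) : ℝ :=
  dotProduct ((Tmat n t)⁻¹ *ᵥ fplus n t) (deltaMinus n)

/-- V_n⁺(t) = ⟨T_n(t)⁻¹ δ⁺, δ⁺⟩. -/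
noncomputable def Vplus (n : ℕ) (t : ℝ) : ℝ :=
  dotProduct ((Tmat n t)⁻¹ *ᵥ deltaPlus n) (deltaPlus n)

/-- V_n⁻(t) = ⟨T_n(t)⁻¹ δ⁻, δ⁺⟩. -/
noncomputable def Vminus (n : ℕ) (t : ℝ) : ℝ :=
  dotProduct ((Tmat n t)⁻¹ *ᵥ deltaMinus n) (deltaPlus n)

lemma fk_neg (t : ℝ) (k : ℤ) : fk t (-k) = fk t k := by
  unfold fk
  congr 1
  apply intervalIntegral.integral_congr
  intro θ _
  simp [neg_mul]


lemma quadForm (n : ℕ) (t : ℝ) (x : Fin n → ℝ) :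
    dotProduct x (Tmat n t *ᵥ x) =
      (1 / (2 * Real.pi)) * ∫ θ in (0:ℝ)..(2 * Real.pi),
        Real.exp (2 * t * Real.cos θ) *
          ((∑ j, x j * Real.cos (j * θ))^2 + (∑ j, x j * Real.sin (j * θ))^2) := by
  have hcont : ∀ (j k : Fin n), Continuous (fun θ : ℝ =>
      x j * x k * (Real.exp (2 * t * Real.cos θ) *
        Real.cos ((((j:ℤ) - (k:ℤ) : ℤ) : ℝ) * θ))) := by
    intro j k; fun_prop
  calc dotProduct x (Tmat n t *ᵥ x)
      = ∑ p : Fin n × Fin n, x p.1 * x p.2 * fk t ((p.1:ℤ) - (p.2:ℤ)) := by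
        rw [Fintype.sum_prod_type]
        simp only [dotProduct, mulVec, dotProduct, Finset.mul_sum, Tmat]
        apply Finset.sum_congr rfl; intro j _
        apply Finset.sum_congr rfl; intro k _
        ring
    _ = ∑ p : Fin n × Fin n, (1 / (2 * Real.pi)) *
          ∫ θ in (0:ℝ)..(2 * Real.pi),
            x p.1 * x p.2 * (Real.exp (2 * t * Real.cos θ) *
              Real.cos ((((p.1:ℤ) - (p.2:ℤ) : ℤ) : ℝ) * θ)) := by
        apply Finset.sum_congr rfl; intro p _
        rw [fk, intervalIntegral.integral_const_mul]
        ring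
    _ = (1 / (2 * Real.pi)) * ∫ θ in (0:ℝ)..(2 * Real.pi),
          ∑ p : Fin n × Fin n,
            x p.1 * x p.2 * (Real.exp (2 * t * Real.cos θ) *
              Real.cos ((((p.1:ℤ) - (p.2:ℤ) : ℤ) : ℝ) * θ)) := by
        rw [← Finset.mul_sum, intervalIntegral.integral_finset_sum]
        intro p _
        exact (hcont p.1 p.2).intervalIntegrable _ _
    _ = (1 / (2 * Real.pi)) * ∫ θ in (0:ℝ)..(2 * Real.pi),
          Real.exp (2 * t * Real.cos θ) *
            ((∑ j, x j * Real.cos (j * θ))^2 + (∑ j, x j * Real.sin (j * θ))^2) := by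
        congr 1
        apply intervalIntegral.integral_congr
        intro θ _
        dsimp only
        rw [Fintype.sum_prod_type]
        have key : ∀ (j k : Fin n),
            x j * x k * (Real.exp (2 * t * Real.cos θ) *
              Real.cos ((((j:ℤ) - (k:ℤ) : ℤ) : ℝ) * θ))
            = Real.exp (2 * t * Real.cos θ) *
              ((x j * Real.cos (j * θ)) * (x k * Real.cos (k * θ))
                + (x j * Real.sin (j * θ)) * (x k * Real.sin (k * θ))) := by
          intro j k
          have : (((j:ℤ) - (k:ℤ) : ℤ) : ℝ) * θ = (j:ℝ) * θ - (k:ℝ) * θ := by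
            push_cast; ring
          rw [this, Real.cos_sub]; ring
        simp only [key, ← Finset.mul_sum]
        congr 1
        rw [sq, sq, Finset.sum_mul_sum, Finset.sum_mul_sum]
        simp [Finset.sum_add_distrib]

lemma Tmat_transpose (n : ℕ) (t : ℝ) : (Tmat n t)ᵀ = Tmat n t := by
  ext j k
  show fk t ((k:ℤ) - (j:ℤ)) = fk t ((j:ℤ) - (k:ℤ))
  rw [← fk_neg t ((j:ℤ) - (k:ℤ)), neg_sub]


lemma exp_injOn_Ioo {θ₁ θ₂ : ℝ} (h₁ : θ₁ ∈ Set.Ioo (0:ℝ) (2*Real.pi))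
    (h₂ : θ₂ ∈ Set.Ioo (0:ℝ) (2*Real.pi))
    (h : Complex.exp (θ₁ * Complex.I) = Complex.exp (θ₂ * Complex.I)) : θ₁ = θ₂ := by
  rw [Complex.exp_eq_exp_iff_exists_int] at h
  obtain ⟨k, hk⟩ := h
  have hre : θ₁ = θ₂ + (k : ℝ) * (2 * Real.pi) := by
    have him := congrArg Complex.im hk
    simpa using him
  have hπ := Real.pi_pos
  have hk0 : k = 0 := by
    rcases lt_trichotomy k 0 with h' | h' | h'
    · have : (k : ℝ) ≤ -1 := by exact_mod_cast Int.le_sub_one_of_lt h'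
      nlinarith [h₁.1, h₁.2, h₂.1, h₂.2]
    · exact h'
    · have : (1 : ℝ) ≤ (k : ℝ) := by exact_mod_cast h'
      nlinarith [h₁.1, h₁.2, h₂.1, h₂.2]
  rw [hk0] at hre; simpa using hre


lemma Tmat_posDef (n : ℕ) (t : ℝ) : (Tmat n t).PosDef := by
  have hπ := Real.pi_pos
  rw [Matrix.posDef_iff_dotProduct_mulVec]
  constructor
  · show (Tmat n t)ᴴ = Tmat n t
    rw [Matrix.conjTranspose_eq_transpose_of_trivial]
    exact Tmat_transpose n t
  · intro x hx
    rw [show star x = x from funext fun i => star_trivial (x i)]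
    rw [quadForm n t x]
    apply mul_pos (by positivity)
    have hlt : (∫ θ in (0:ℝ)..(2*Real.pi), (0:ℝ)) < ∫ θ in (0:ℝ)..(2*Real.pi),
        Real.exp (2 * t * Real.cos θ) *
          ((∑ j, x j * Real.cos (j * θ))^2 + (∑ j, x j * Real.sin (j * θ))^2) := by
      apply intervalIntegral.integral_lt_integral_of_continuousOn_of_le_of_exists_lt
        (by positivity) continuousOn_const
        (Continuous.continuousOn (by fun_prop))
      · intro θ _; positivity
      · by_contra hcon
        push_neg at hcon
        -- all values are zero on Icc
        have hzero : ∀ θ ∈ Set.Icc (0:ℝ) (2*Real.pi),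
            (∑ j, x j * Real.cos (j * θ)) = 0 ∧ (∑ j, x j * Real.sin (j * θ)) = 0 := by
          intro θ hθ
          have h1 := hcon θ hθ
          have h2 : (0:ℝ) ≤ Real.exp (2 * t * Real.cos θ) *
              ((∑ j, x j * Real.cos (j * θ))^2 + (∑ j, x j * Real.sin (j * θ))^2) := by
            positivity
          have h3 : Real.exp (2 * t * Real.cos θ) > 0 := Real.exp_pos _
          set C := ∑ j, x j * Real.cos (j * θ) with hC
          set S := ∑ j, x j * Real.sin (j * θ) with hS
          have hv : 0 ≤ C^2 + S^2 := by positivity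
          have h4 : C^2 + S^2 = 0 := by
            by_contra hne
            have hvpos : 0 < C^2 + S^2 := lt_of_le_of_ne hv (Ne.symm hne)
            nlinarith [mul_pos h3 hvpos]
          have hC2 : C^2 = 0 := by nlinarith [sq_nonneg C, sq_nonneg S]
          have hS2 : S^2 = 0 := by nlinarith [sq_nonneg C, sq_nonneg S]
          exact ⟨sq_eq_zero_iff.mp hC2, sq_eq_zero_iff.mp hS2⟩
        -- polynomial argument
        set P : Polynomial ℂ := ∑ j : Fin n, Polynomial.monomial (j : ℕ) ((x j : ℂ)) with hP
        have heval : ∀ θ : ℝ, P.eval (Complex.exp (θ * Complex.I))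
            = ((∑ j, x j * Real.cos (j * θ) : ℝ) : ℂ)
              + ((∑ j, x j * Real.sin (j * θ) : ℝ) : ℂ) * Complex.I := by
          intro θ
          rw [hP, Polynomial.eval_finset_sum]
          simp only [Polynomial.eval_monomial]
          have hterm : ∀ j : Fin n, ((x j : ℂ)) * (Complex.exp (θ * Complex.I)) ^ (j:ℕ)
              = ((x j * Real.cos (j * θ) : ℝ) : ℂ)
                + ((x j * Real.sin (j * θ) : ℝ) : ℂ) * Complex.I := by
            intro j
            rw [← Complex.exp_nat_mul]
            have : (j : ℂ) * (↑θ * Complex.I) = ((j * θ : ℝ) : ℂ) * Complex.I := by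
              push_cast; ring
            rw [this, Complex.exp_mul_I, ← Complex.ofReal_cos, ← Complex.ofReal_sin]
            push_cast; ring
          rw [Finset.sum_congr rfl (fun j _ => hterm j)]
          push_cast
          rw [Finset.sum_add_distrib, Finset.sum_mul]
        have hroots : ∀ θ ∈ Set.Ioo (0:ℝ) (2*Real.pi),
            P.IsRoot (Complex.exp (θ * Complex.I)) := by
          intro θ hθ
          have hz := hzero θ (Set.Ioo_subset_Icc_self hθ)
          unfold Polynomial.IsRoot
          rw [heval θ, hz.1, hz.2]
          simp
        have hP0 : P = 0 := by
          apply Polynomial.eq_zero_of_infinite_isRoot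
          apply Set.Infinite.mono (s := (fun θ : ℝ => Complex.exp (θ * Complex.I)) ''
            Set.Ioo 0 (2*Real.pi))
          · rintro z ⟨θ, hθ, rfl⟩; exact hroots θ hθ
          · apply Set.Infinite.image
            · intro θ₁ h₁ θ₂ h₂ h; exact exp_injOn_Ioo h₁ h₂ h
            · exact Set.Ioo_infinite (by positivity)
        apply hx
        funext j
        have hc : P.coeff (j : ℕ) = 0 := by rw [hP0]; simp
        rw [hP, Polynomial.finset_sum_coeff] at hc
        simp only [Polynomial.coeff_monomial, Fin.val_eq_val] at hc
        rw [Finset.sum_ite_eq' Finset.univ j (fun j => ((x j : ℂ)))] at hc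
        simp only [Finset.mem_univ, if_true, Complex.ofReal_eq_zero] at hc
        exact hc

    simpa using hlt

lemma Tmat_det_isUnit (n : ℕ) (t : ℝ) : IsUnit (Tmat n t).det :=
  (Tmat_posDef n t).det_pos.ne'.isUnit

lemma Tmat_inv_symm (n : ℕ) (t : ℝ) (i j : Fin n) :
    (Tmat n t)⁻¹ i j = (Tmat n t)⁻¹ j i := by
  have h : ((Tmat n t)⁻¹)ᵀ = (Tmat n t)⁻¹ := by
    rw [Matrix.transpose_nonsing_inv, Tmat_transpose]
  conv_rhs => rw [← h]
  rfl

lemma Tmat_rev (n : ℕ) (t : ℝ) :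
    (Tmat n t).submatrix (Fin.rev : Fin n → Fin n) Fin.rev = Tmat n t := by
  ext j k
  show fk t (((Fin.rev j : Fin n) : ℤ) - ((Fin.rev k : Fin n) : ℤ)) = fk t ((j:ℤ) - (k:ℤ))
  have hj : ((Fin.rev j : Fin n) : ℤ) = (n:ℤ) - 1 - (j:ℤ) := by
    have h1 : (Fin.rev j).val = n - (j.val + 1) := Fin.val_rev j
    have h2 := j.isLt
    omega
  have hk : ((Fin.rev k : Fin n) : ℤ) = (n:ℤ) - 1 - (k:ℤ) := by
    have h1 : (Fin.rev k).val = n - (k.val + 1) := Fin.val_rev k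
    have h2 := k.isLt
    omega
  rw [hj, hk, show ((n:ℤ) - 1 - j) - ((n:ℤ) - 1 - k) = -((j:ℤ) - (k:ℤ)) by ring, fk_neg]

lemma Tmat_inv_rev (n : ℕ) (t : ℝ) (i j : Fin n) :
    (Tmat n t)⁻¹ (Fin.rev i) (Fin.rev j) = (Tmat n t)⁻¹ i j := by
  have h := Matrix.inv_submatrix_equiv (Tmat n t) (Fin.revPerm : Equiv.Perm (Fin n)) Fin.revPerm
  rw [show ((Tmat n t).submatrix (Fin.revPerm : Equiv.Perm (Fin n)) Fin.revPerm)
      = Tmat n t from Tmat_rev n t] at h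
  exact (congrFun (congrFun h.symm i) j)

lemma deltaPlus_eq (k : ℕ) : deltaPlus (k+1) = Pi.single (0 : Fin (k+1)) 1 := by
  funext i
  have hiff : ((i:ℕ) = 0) ↔ i = 0 := by rw [Fin.ext_iff]; simp
  simp [deltaPlus, Pi.single_apply, hiff]

lemma deltaMinus_eq (k : ℕ) : deltaMinus (k+1) = Pi.single (Fin.last k) 1 := by
  funext i
  have hiff : ((i:ℕ) = k) ↔ i = Fin.last k := by
    rw [Fin.ext_iff]; simp
  simp [deltaMinus, Pi.single_apply, hiff]

lemma Vplus_eq (k : ℕ) (t : ℝ) : Vplus (k+1) t = (Tmat (k+1) t)⁻¹ 0 0 := by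
  rw [Vplus, deltaPlus_eq, Matrix.mulVec_single, dotProduct_single]
  simp

lemma Vminus_eq (k : ℕ) (t : ℝ) : Vminus (k+1) t = (Tmat (k+1) t)⁻¹ 0 (Fin.last k) := by
  rw [Vminus, deltaMinus_eq, deltaPlus_eq, Matrix.mulVec_single, dotProduct_single]
  simp


/-- V_m⁺² − V_m⁻² = V_{m−1}⁺ · V_m⁺. -/
theorem Vplus_sq_sub_Vminus_sq (m : ℕ) (hm : 2 ≤ m) (t : ℝ) :
    (Vplus m t) ^ 2 - (Vminus m t) ^ 2 = Vplus (m - 1) t * Vplus m t := by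
  obtain ⟨n, rfl⟩ : ∃ n, m = n + 2 := ⟨m - 2, by omega⟩
  have hm1 : n + 2 - 1 = n + 1 := by omega
  rw [hm1]
  set T := Tmat (n + 2) t with hT
  set P := Tmat (n + 1) t with hP
  set B := T⁻¹ with hB
  have hTdet : IsUnit T.det := Tmat_det_isUnit (n+2) t
  have hPdet : IsUnit P.det := Tmat_det_isUnit (n+1) t
  set L : Fin (n + 2) := Fin.last (n + 1) with hL
  -- the vector q : top part of last column of T
  set q : Fin (n + 1) → ℝ := fun j => T j.castSucc L with hq
  set y : Fin (n + 1) → ℝ := P⁻¹ *ᵥ q with hy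
  have hPy : P *ᵥ y = q := by
    rw [hy, Matrix.mulVec_mulVec, Matrix.mul_nonsing_inv _ hPdet, Matrix.one_mulVec]
  -- block structure
  have hblock : ∀ (j k : Fin (n+1)), T j.castSucc k.castSucc = P j k := by
    intro j k
    show fk t _ = fk t _
    simp [Fin.coe_castSucc]
  -- the vector z
  set z : Fin (n + 2) → ℝ := Fin.snoc (fun j => -y j) 1 with hz
  set s : ℝ := (T *ᵥ z) L with hs
  have hTz : T *ᵥ z = Pi.single L s := by
    funext i
    induction i using Fin.lastCases with
    | last => rw [← hL, hs]; simp
    | cast j =>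
      have h1 : (T *ᵥ z) j.castSucc = 0 := by
        rw [Matrix.mulVec, dotProduct, Fin.sum_univ_castSucc]
        have h2 : ∀ k : Fin (n+1), T j.castSucc k.castSucc * z k.castSucc
            = -(P j k * y k) := by
          intro k
          rw [hblock, hz]
          simp [Fin.snoc_castSucc]
        rw [Finset.sum_congr rfl (fun k _ => h2 k)]
        have h3 : T j.castSucc (Fin.last (n+1)) * z (Fin.last (n+1)) = q j := by
          rw [hz]; simp [Fin.snoc_last, hq, hL]
        rw [h3, Finset.sum_neg_distrib]
        have h4 : ∑ k, P j k * y k = q j := by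
          rw [← hPy]; rfl
        rw [h4]; ring
      rw [h1]
      rw [Pi.single_apply, if_neg]
      exact fun hc => (Fin.castSucc_lt_last j).ne (by rw [hc])
  have hs0 : s ≠ 0 := by
    intro hs0
    have hz0 : z = 0 := by
      have h1 : T *ᵥ z = 0 := by rw [hTz, hs0]; simp
      calc z = (1 : Matrix (Fin (n+2)) (Fin (n+2)) ℝ) *ᵥ z := by rw [Matrix.one_mulVec]
        _ = (T⁻¹ * T) *ᵥ z := by rw [Matrix.nonsing_inv_mul _ hTdet]
        _ = T⁻¹ *ᵥ (T *ᵥ z) := by rw [Matrix.mulVec_mulVec]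
        _ = 0 := by rw [h1]; simp
    have : z L = 1 := by rw [hz, hL]; simp
    rw [hz0] at this; simp at this
  -- B column L
  have hBL : ∀ i, B i L = s⁻¹ * z i := by
    have h1 : B *ᵥ (T *ᵥ z) = z := by
      rw [Matrix.mulVec_mulVec, hB, Matrix.nonsing_inv_mul _ hTdet, Matrix.one_mulVec]
    rw [hTz] at h1
    intro i
    have h2 : B i L * s = z i := by
      have h3 := congrFun h1 i
      rwa [Matrix.mulVec_single] at h3
    field_simp
    linarith [h2]
  have hBLL : B L L = s⁻¹ := by rw [hBL]; rw [hz, hL]; simp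
  have hz0' : z 0 = -y 0 := by
    rw [hz, show (0 : Fin (n+2)) = (0 : Fin (n+1)).castSucc from rfl]
    rw [Fin.snoc_castSucc]
  have hB0L : B 0 L = -(s⁻¹ * y 0) := by rw [hBL, hz0']; ring
  -- persymmetry : B 0 0 = B L L
  have hper : B 0 0 = B L L := by
    have := Tmat_inv_rev (n+2) t L L
    rw [show Fin.rev L = 0 by rw [hL]; simp [Fin.rev_last]] at this
    exact this
  -- column 0 of B
  set xv : Fin (n + 2) → ℝ := fun i => B i 0 with hxv
  have hTx : T *ᵥ xv = Pi.single (0 : Fin (n+2)) 1 := by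
    have h1 : xv = B *ᵥ Pi.single (0 : Fin (n+2)) 1 := by
      funext i; rw [Matrix.mulVec_single]; simp [hxv]
    rw [h1, Matrix.mulVec_mulVec, hB, Matrix.mul_nonsing_inv _ hTdet, Matrix.one_mulVec]
  -- top block equation
  set W : ℝ := P⁻¹ 0 0 with hW
  have hkey : B 0 0 = W - B L 0 * y 0 := by
    -- P *ᵥ (xv ∘ castSucc) = Pi.single 0 1 - (xv L) • q
    have h1 : ∀ j : Fin (n+1), ∑ k, P j k * xv k.castSucc
        = (Pi.single (0 : Fin (n+1)) (1:ℝ) : Fin (n+1) → ℝ) j - xv L * q j := by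
      intro j
      have h2 := congrFun hTx j.castSucc
      rw [Matrix.mulVec, dotProduct, Fin.sum_univ_castSucc] at h2
      have h3 : ∀ k : Fin (n+1), T j.castSucc k.castSucc * xv k.castSucc
          = P j k * xv k.castSucc := fun k => by rw [hblock]
      rw [Finset.sum_congr rfl (fun k _ => h3 k)] at h2
      have h4 : (Pi.single (0 : Fin (n+2)) (1:ℝ) : Fin (n+2) → ℝ) j.castSucc
          = (Pi.single (0 : Fin (n+1)) (1:ℝ) : Fin (n+1) → ℝ) j := by
        rw [Pi.single_apply, Pi.single_apply]
        congr 1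
        rw [Fin.ext_iff, Fin.ext_iff]; rfl
      rw [h4] at h2
      have h5 : T j.castSucc (Fin.last (n+1)) = q j := rfl
      rw [h5] at h2
      linarith [h2]
    -- so xv ∘ castSucc = P⁻¹ *ᵥ (single 0 1) - xv L • y
    have h6 : (fun j => xv j.castSucc) = P⁻¹ *ᵥ (Pi.single (0:Fin (n+1)) 1 - xv L • q) := by
      have h7 : P *ᵥ (fun j => xv j.castSucc) = Pi.single (0:Fin (n+1)) 1 - xv L • q := by
        funext j
        rw [Matrix.mulVec, dotProduct]
        rw [h1 j]
        simp [Pi.sub_apply, Pi.smul_apply, smul_eq_mul]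
      rw [← h7, Matrix.mulVec_mulVec, Matrix.nonsing_inv_mul _ hPdet, Matrix.one_mulVec]
    have h8 := congrFun h6 0
    rw [show (0 : Fin (n+1)).castSucc = (0 : Fin (n+2)) from rfl] at h8
    have h9 : xv 0 = B 0 0 := rfl
    rw [Matrix.mulVec_sub] at h8
    have h10 : (P⁻¹ *ᵥ Pi.single (0:Fin (n+1)) 1) 0 = W := by
      rw [Matrix.mulVec_single]; simp [hW]
    have h11 : (P⁻¹ *ᵥ (xv L • q)) 0 = xv L * y 0 := by
      rw [Matrix.mulVec_smul]
      simp [hy, smul_eq_mul]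
    rw [Pi.sub_apply, h10, h11] at h8
    rw [h9] at h8
    rw [h8]
  have hBL0 : B L 0 = B 0 L := Tmat_inv_symm (n+2) t L 0
  -- final computation
  have hV2 : Vplus (n+2) t = s⁻¹ := by
    rw [show n + 2 = (n+1) + 1 from rfl, Vplus_eq]
    show B 0 0 = s⁻¹
    rw [hper, hBLL]
  have hVm : Vminus (n+2) t = -(s⁻¹ * y 0) := by
    rw [show n + 2 = (n+1) + 1 from rfl, Vminus_eq]
    show B 0 L = _
    rw [hB0L]
  have hV1 : Vplus (n+1) t = W := by
    rw [Vplus_eq]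
  have hmain : s⁻¹ = W + s⁻¹ * y 0 * y 0 := by
    have := hkey
    rw [hper, hBLL, hBL0, hB0L] at this
    linarith [this]
  rw [hV2, hVm, hV1]
  have : s⁻¹ * s⁻¹ = (W + s⁻¹ * y 0 * y 0) * s⁻¹ := by rw [← hmain]
  nlinarith [this]
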